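/- Let a = (∂₂ - i∂₁ + 2b̃x² + α̃₁ + iα̃₂)/√(4b̃) with b̃ > 0, and let ψ₀(x) = Σ_{k∈ℤ} exp(ikx¹ - (2b̃x² + k + α̃₁ + iα̃₂)²/(4b̃)). Then a·ψ₀ = 0. -/

import Mathlib

/-- The lowering operator
`a = (∂₂ - i∂₁ + 2b̃x² + α̃₁ + iα̃₂)/√(4b̃)` annihilates the ground-state
theta-like series `ψ₀`. -/
theorem stmt_12 (b : ℝ) (hb : 0 < b) (α₁ α₂ : ℝ)
    (ψ₀ : ℝ → ℝ → ℂ)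
    (hψ₀ : ∀ x y : ℝ, ψ₀ x y = ∑' k : ℤ,
      Complex.exp (Complex.I * k * x -
        (2 * b * y + k + α₁ + Complex.I * α₂) ^ 2 / (4 * b)))
    (a : (ℝ → ℝ → ℂ) → (ℝ → ℝ → ℂ))
    (ha : ∀ (ψ : ℝ → ℝ → ℂ) (x y : ℝ),
      a ψ x y = (deriv (fun t => ψ x t) y - Complex.I * deriv (fun s => ψ s y) x
          + (2 * b * y + α₁ + Complex.I * α₂) * ψ x y) / (Real.sqrt (4 * b) : ℂ)) :
    ∀ x y : ℝ, a ψ₀ x y = 0 := by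
  intro x y
  have hb' : (b : ℂ) ≠ 0 := by exact_mod_cast hb.ne'
  have hπ : (Real.pi : ℂ) ≠ 0 := by exact_mod_cast Real.pi_ne_zero
  set c : ℂ := (α₁ : ℂ) + Complex.I * α₂ with hc
  set τ : ℂ := Complex.I * ((4 * Real.pi * b)⁻¹ : ℝ) with hτdef
  have hτ : 0 < τ.im := by
    simp only [hτdef, Complex.mul_im, Complex.I_re, Complex.I_im, Complex.ofReal_re,
      Complex.ofReal_im, zero_mul, one_mul, add_zero, mul_zero, zero_add]
    positivity
  set w : ℂ → ℂ → ℂ := fun u v => u / (2 * Real.pi) +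
      (Complex.I / (4 * Real.pi * b)) * (2 * b * v + c) with hw
  set F : ℂ → ℂ → ℂ := fun u v =>
      Complex.exp (-(2 * b * v + c) ^ 2 / (4 * b)) * jacobiTheta₂ (w u v) τ with hF
  have key : ∀ u v : ℝ, ψ₀ u v = F (u : ℂ) (v : ℂ) := by
    intro u v
    rw [hψ₀, hF]
    beta_reduce
    rw [show jacobiTheta₂ (w u v) τ = ∑' n : ℤ, jacobiTheta₂_term n (w u v) τ from rfl,
      ← tsum_mul_left]
    congr 1
    funext k
    rw [jacobiTheta₂_term, ← Complex.exp_add]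
    congr 1
    rw [hw, hτdef, hc]
    push_cast
    have hI2 : (Complex.I) ^ 2 = -1 := Complex.I_sq
    have hI3 : (Complex.I) ^ 3 = -Complex.I := by
      rw [pow_succ, hI2]; ring
    field_simp [hb', hπ]
    linear_combination (-(2 * (2 * (b:ℂ) * v + ((α₁:ℂ) + Complex.I * α₂))) * k - (k:ℂ) ^ 2) * hI2
  -- derivative in the second (y) variable
  have hwv : HasDerivAt (fun v : ℂ => w (x:ℂ) v)
      (Complex.I / (4 * Real.pi * b) * (2 * b)) (y : ℂ) := by
    have h0 : HasDerivAt (fun v : ℂ => 2 * (b:ℂ) * v + c) (2 * (b:ℂ)) (y : ℂ) := by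
      simpa using ((hasDerivAt_id ((y:ℂ))).const_mul (2 * (b:ℂ))).add_const c
    simpa [hw] using (h0.const_mul (Complex.I / (4 * (Real.pi:ℂ) * b))).const_add
      ((x:ℂ) / (2 * (Real.pi:ℂ)))
  have hθv : HasDerivAt (fun v : ℂ => jacobiTheta₂ (w (x:ℂ) v) τ)
      (jacobiTheta₂' (w (x:ℂ) (y:ℂ)) τ * (Complex.I / (4 * Real.pi * b) * (2 * b))) (y : ℂ) := by
    exact
      (hasDerivAt_jacobiTheta₂_fst (w (x:ℂ) (y:ℂ)) hτ).comp ((y:ℂ)) hwv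
  have hgv : HasDerivAt (fun v : ℂ => Complex.exp (-(2 * b * v + c) ^ 2 / (4 * b)))
      (Complex.exp (-(2 * b * (y:ℂ) + c) ^ 2 / (4 * b)) *
        (-(2 * (2 * b * (y:ℂ) + c) * (2 * b)) / (4 * b))) (y : ℂ) := by
    have h1 : HasDerivAt (fun v : ℂ => -(2 * b * v + c) ^ 2 / (4 * b))
        (-(2 * (2 * b * (y:ℂ) + c) * (2 * b)) / (4 * b)) (y : ℂ) := by
      have h2 := (((hasDerivAt_id ((y:ℂ))).const_mul (2 * (b:ℂ))).add_const c).pow 2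
      have h3 := (h2.neg).div_const (4 * (b:ℂ))
      convert h3 using 1
      all_goals try rfl
      all_goals try simp
      all_goals try ring
    simpa [mul_comm] using h1.cexp
  have hFv : HasDerivAt (fun v : ℂ => F (x:ℂ) v)
      (Complex.exp (-(2 * b * (y:ℂ) + c) ^ 2 / (4 * b)) *
          (-(2 * (2 * b * (y:ℂ) + c) * (2 * b)) / (4 * b)) * jacobiTheta₂ (w (x:ℂ) (y:ℂ)) τ +
        Complex.exp (-(2 * b * (y:ℂ) + c) ^ 2 / (4 * b)) *
          (jacobiTheta₂' (w (x:ℂ) (y:ℂ)) τ * (Complex.I / (4 * Real.pi * b) * (2 * b)))) (y : ℂ) := by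
    exact hgv.mul hθv
  have hDy : deriv (fun t : ℝ => ψ₀ x t) y =
      Complex.exp (-(2 * b * (y:ℂ) + c) ^ 2 / (4 * b)) *
          (-(2 * (2 * b * (y:ℂ) + c) * (2 * b)) / (4 * b)) * jacobiTheta₂ (w (x:ℂ) (y:ℂ)) τ +
        Complex.exp (-(2 * b * (y:ℂ) + c) ^ 2 / (4 * b)) *
          (jacobiTheta₂' (w (x:ℂ) (y:ℂ)) τ * (Complex.I / (4 * Real.pi * b) * (2 * b))) := by
    have e1 : (fun t : ℝ => ψ₀ x t) = fun t : ℝ => F (x:ℂ) (t:ℂ) := funext fun t => key x t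
    rw [e1]
    exact hFv.comp_ofReal.deriv
  -- derivative in the first (x) variable
  have hwu : HasDerivAt (fun u : ℂ => w u (y:ℂ)) (1 / (2 * Real.pi)) (x : ℂ) := by
    simpa [hw] using ((hasDerivAt_id ((x:ℂ))).div_const (2 * (Real.pi:ℂ))).add_const
      (Complex.I / (4 * (Real.pi:ℂ) * b) * (2 * b * (y:ℂ) + c))
  have hθu : HasDerivAt (fun u : ℂ => jacobiTheta₂ (w u (y:ℂ)) τ)
      (jacobiTheta₂' (w (x:ℂ) (y:ℂ)) τ * (1 / (2 * Real.pi))) (x : ℂ) := by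
    exact
      (hasDerivAt_jacobiTheta₂_fst (w (x:ℂ) (y:ℂ)) hτ).comp ((x:ℂ)) hwu
  have hFu : HasDerivAt (fun u : ℂ => F u (y:ℂ))
      (Complex.exp (-(2 * b * (y:ℂ) + c) ^ 2 / (4 * b)) *
        (jacobiTheta₂' (w (x:ℂ) (y:ℂ)) τ * (1 / (2 * Real.pi)))) (x : ℂ) := by
    simpa [hF] using hθu.const_mul (Complex.exp (-(2 * b * (y:ℂ) + c) ^ 2 / (4 * b)))
  have hDx : deriv (fun s : ℝ => ψ₀ s y) x =
      Complex.exp (-(2 * b * (y:ℂ) + c) ^ 2 / (4 * b)) *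
        (jacobiTheta₂' (w (x:ℂ) (y:ℂ)) τ * (1 / (2 * Real.pi))) := by
    have e2 : (fun s : ℝ => ψ₀ s y) = fun s : ℝ => F (s:ℂ) (y:ℂ) := funext fun s => key s y
    rw [e2]
    exact hFu.comp_ofReal.deriv
  -- conclude
  rw [ha, hDy, hDx, key x y, hF]
  rw [div_eq_zero_iff]
  left
  beta_reduce
  rw [hc]
  have hA : -(2 * (2 * (b:ℂ) * (y:ℂ) + ((α₁:ℂ) + Complex.I * α₂)) * (2 * (b:ℂ))) / (4 * (b:ℂ)) +
      (2 * (b:ℂ) * (y:ℂ) + ((α₁:ℂ) + Complex.I * α₂)) = 0 := by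
    field_simp
    ring
  have hB : Complex.I / (4 * (Real.pi:ℂ) * (b:ℂ)) * (2 * (b:ℂ)) =
      Complex.I * (1 / (2 * (Real.pi:ℂ))) := by
    field_simp
    ring
  linear_combination
    (Complex.exp (-(2 * (b:ℂ) * (y:ℂ) + ((α₁:ℂ) + Complex.I * α₂)) ^ 2 / (4 * (b:ℂ))) *
      jacobiTheta₂ (w (x:ℂ) (y:ℂ)) τ) * hA +
    (Complex.exp (-(2 * (b:ℂ) * (y:ℂ) + ((α₁:ℂ) + Complex.I * α₂)) ^ 2 / (4 * (b:ℂ))) *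
      jacobiTheta₂' (w (x:ℂ) (y:ℂ)) τ) * hB
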